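/- Let m⁺ ≥ 1, m⁻ ≤ -1 be integers, q⁺ = e⁺/m⁺, q⁻ = e⁻/m⁻ in lowest terms with q⁺ + q⁻ < 0, and Δ = m⁺ m⁻ (q⁺ + q⁻) > 0. Then at least one of ⌊m⁻/(Δ m⁺)⌋ and ⌊m⁺/(Δ m⁻)⌋ equals -1. -/

import Mathlib

/-- At least one of ⌊m⁻/(Δm⁺)⌋ and ⌊m⁺/(Δm⁻)⌋ equals -1, where
Δ = m⁺m⁻(q⁺+q⁻) > 0. -/
theorem stmt_7 (mp mm ep em : ℤ) (hmp : 1 ≤ mp) (hmm : mm ≤ -1)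
    (hcp : Int.gcd ep mp = 1) (hcm : Int.gcd em mm = 1)
    (hneg : (ep : ℚ) / mp + (em : ℚ) / mm < 0) :
    ⌊(mm : ℚ) / ((((mp : ℚ) * mm) * ((ep : ℚ) / mp + (em : ℚ) / mm)) * mp)⌋ = -1
      ∨ ⌊(mp : ℚ) / ((((mp : ℚ) * mm) * ((ep : ℚ) / mp + (em : ℚ) / mm)) * mm)⌋ = -1 := by
  have hmp0 : (0:ℤ) < mp := by omega
  have hmm0 : mm < 0 := by omega
  have hmpQ : (mp:ℚ) ≠ 0 := by exact_mod_cast hmp0.ne'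
  have hmmQ : (mm:ℚ) ≠ 0 := by exact_mod_cast hmm0.ne
  set D : ℤ := ep * mm + em * mp with hDdef
  have hD : ((mp:ℚ) * mm) * ((ep : ℚ)/mp + (em : ℚ)/mm) = (D : ℚ) := by
    field_simp
    norm_cast
    rw [hDdef]; ring
  have hDpos : 0 < D := by
    have hprod : ((mp:ℚ) * mm) < 0 :=
      mul_neg_of_pos_of_neg (by exact_mod_cast hmp0) (by exact_mod_cast hmm0)
    have : (0:ℚ) < (D:ℚ) := by
      rw [← hD]
      exact mul_pos_of_neg_of_neg hprod hneg
    exact_mod_cast this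
  rw [hD]
  have hD1 : (1:ℤ) ≤ D := hDpos
  by_cases h : -mm ≤ D * mp
  · left
    have hden : (0:ℚ) < (D:ℚ) * mp := by
      have : (0:ℤ) < D * mp := mul_pos hDpos hmp0
      push_cast
      exact_mod_cast this
    rw [Int.floor_eq_iff]
    constructor
    · rw [le_div_iff₀ hden]
      push_cast
      have : (-(mm:ℚ)) ≤ (D:ℚ) * mp := by exact_mod_cast h
      linarith
    · have : (mm:ℚ) < 0 := by exact_mod_cast hmm0
      push_cast
      calc (mm:ℚ) / ((D:ℚ) * mp) < 0 := div_neg_of_neg_of_pos this hden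
        _ ≤ -1 + 1 := by norm_num
  · right
    push_neg at h
    have key : mp ≤ D * (-mm) := by nlinarith
    have hden : (D:ℚ) * mm < 0 := by
      have : D * mm < 0 := mul_neg_of_pos_of_neg hDpos hmm0
      exact_mod_cast this
    rw [Int.floor_eq_iff]
    constructor
    · rw [le_div_iff_of_neg hden]
      have : (mp:ℚ) ≤ (D:ℚ) * (-mm) := by exact_mod_cast key
      push_cast
      linarith
    · have hmpQ' : (0:ℚ) < mp := by exact_mod_cast hmp0
      push_cast
      calc (mp:ℚ) / ((D:ℚ) * mm) < 0 := div_neg_of_pos_of_neg hmpQ' hden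
        _ ≤ -1 + 1 := by norm_num
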